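/- Let Λ_1, …, Λ_N be i.i.d. random vectors in ℝᵏ with E‖Λ_1‖² < ∞, let F_1, …, F_T be i.i.d. random vectors in ℝᵏ with Σ_F = E[F_1F_1ᵀ], and let (e_{tj})_{t≤T, j≤N} be i.i.d. real random variables with mean 0 and variance σ²; assume the three families (Λ_j), (F_t), (e_{tj}) are mutually independent. Let Q_1, …, Q_N ⊆ {1,…,T} be deterministic sets with |Q_j| ≥ qT for a constant q ∈ (0,1]. Then E‖√(T/N)·∑_{j=1}^N (1/|Q_j|) ∑_{t∈Q_j} e_{tj}·Λ_j F_tᵀ‖_F² ≤ σ²·E‖Λ_1‖²·tr(Σ_F)/q. -/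

import Mathlib

open MeasureTheory ProbabilityTheory Finset Filter
open scoped ENNReal NNReal

namespace Stmt6Aux

lemma eq_zero_or_top_of_eq_two_mul {x : ℝ≥0∞} (h : x = 2 * x) : x = 0 ∨ x = ⊤ := by
  rcases eq_or_ne x ⊤ with hx | hx
  · exact Or.inr hx
  · left
    by_contra h0
    have hlt : x < 2 * x := by
      conv_lhs => rw [← one_mul x]
      exact ENNReal.mul_lt_mul_left h0 hx ENNReal.one_lt_two
    exact absurd h (ne_of_lt hlt)

lemma lintegral_ofReal_eq_top {α : Type*} [MeasurableSpace α] {μ : Measure α} {f : α → ℝ}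
    (hm : AEStronglyMeasurable f μ) (hnn : 0 ≤ᵐ[μ] f) (h : ¬ Integrable f μ) :
    ∫⁻ a, ENNReal.ofReal (f a) ∂μ = ⊤ := by
  by_contra hne
  exact h ⟨hm, (hasFiniteIntegral_iff_ofReal hnn).2 (lt_top_iff_ne_top.2 hne)⟩

variable {ι : Type*} [Fintype ι] [DecidableEq ι]

lemma measurable_ofReal_sq_sum (β : ι → ℝ) :
    Measurable fun x : ι → ℝ => ENNReal.ofReal ((∑ i, β i * x i) ^ 2) :=
  ENNReal.measurable_ofReal.comp
    ((Finset.measurable_sum _ fun i _ => (measurable_pi_apply (X := fun _ : ι => ℝ) i).const_mul (β i)).pow_const 2)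

lemma fiber_sq_integral (ν : Measure ℝ) [IsProbabilityMeasure ν]
    (hL2 : Integrable (fun t : ℝ => t ^ 2) ν) (hmean : ∫ t, t ∂ν = 0)
    (β : ι → ℝ) :
    ∫⁻ x, ENNReal.ofReal ((∑ i, β i * x i) ^ 2) ∂(Measure.pi fun _ : ι => ν)
      = ENNReal.ofReal ((∫ t, t ^ 2 ∂ν) * ∑ i, β i ^ 2) := by
  set σ2 := ∫ t, t ^ 2 ∂ν with hσ2
  have hσ2nn : 0 ≤ σ2 := integral_nonneg fun t => sq_nonneg t
  have hid : Integrable (fun t : ℝ => t) ν := by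
    have h1 : Integrable (fun t : ℝ => 1 + t ^ 2) ν := (integrable_const 1).add hL2
    refine h1.mono' measurable_id.aestronglyMeasurable ?_
    filter_upwards with t
    have h2 : |t| ≤ 1 + t ^ 2 := by nlinarith [abs_nonneg t, sq_abs t, sq_nonneg (|t| - 1)]
    simpa [Real.norm_eq_abs] using h2
  have hf := measurable_ofReal_sq_sum β
  have key : ∀ s : Finset ι, ∀ x : ι → ℝ,
      (∫⋯∫⁻_s, (fun x => ENNReal.ofReal ((∑ i, β i * x i) ^ 2)) ∂(fun _ => ν)) x
        = ENNReal.ofReal (σ2 * ∑ i ∈ s, β i ^ 2 + (∑ i ∈ sᶜ, β i * x i) ^ 2) := by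
    intro s
    induction s using Finset.induction_on with
    | empty => intro x; simp
    | @insert i s hi ih =>
      intro x
      rw [lmarginal_insert _ hf hi]
      have hisc : i ∈ sᶜ := Finset.mem_compl.2 hi
      have hupd : ∀ t : ℝ, (∑ i' ∈ sᶜ, β i' * Function.update x i t i')
          = β i * t + ∑ i' ∈ (insert i s)ᶜ, β i' * x i' := by
        intro t
        rw [Finset.compl_insert, ← Finset.add_sum_erase _ _ hisc]
        congr 1
        · simp
        · exact Finset.sum_congr rfl fun i' hi' => by
            rw [Function.update_of_ne (Finset.ne_of_mem_erase hi')]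
      simp_rw [ih, hupd]
      set r := ∑ i' ∈ (insert i s)ᶜ, β i' * x i' with hr
      set a := σ2 * ∑ i' ∈ s, β i' ^ 2 with ha
      have hann : 0 ≤ a := mul_nonneg hσ2nn (Finset.sum_nonneg fun _ _ => sq_nonneg _)
      have hrw : (fun t : ℝ => a + (β i * t + r) ^ 2)
          = fun t => ((a + r ^ 2) + (2 * β i * r) * t) + β i ^ 2 * t ^ 2 := by
        funext t; ring
      have hint : Integrable (fun t : ℝ => a + (β i * t + r) ^ 2) ν := by
        rw [hrw]
        exact ((integrable_const _).add (hid.const_mul _)).add (hL2.const_mul _)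
      rw [← ofReal_integral_eq_lintegral_ofReal hint
        (Filter.Eventually.of_forall fun t => add_nonneg hann (sq_nonneg _))]
      have h4 : Integrable (fun _ : ℝ => a + r ^ 2) ν := integrable_const _
      have h5 : Integrable (fun t : ℝ => 2 * β i * r * t) ν := hid.const_mul _
      have h6 : Integrable (fun t : ℝ => β i ^ 2 * t ^ 2) ν := hL2.const_mul _
      have h45 : Integrable (fun t : ℝ => a + r ^ 2 + 2 * β i * r * t) ν := h4.add h5
      have hval : ∫ t, (a + (β i * t + r) ^ 2) ∂ν = a + (β i ^ 2 * σ2 + r ^ 2) := by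
        rw [hrw, integral_add h45 h6, integral_add h4 h5, integral_const,
          integral_const_mul, integral_const_mul, hmean, ← hσ2]
        simp
        ring
      rw [hval]
      congr 1
      rw [Finset.sum_insert hi]
      ring
  rw [lintegral_eq_lmarginal_univ (fun _ : ι => (0 : ℝ)), key]
  simp

lemma fiber_sq_top (ν : Measure ℝ) [IsProbabilityMeasure ν]
    (hL2 : ¬ Integrable (fun t : ℝ => t ^ 2) ν) (β : ι → ℝ) :
    (∫⁻ x, ENNReal.ofReal ((∑ i, β i * x i) ^ 2) ∂(Measure.pi fun _ : ι => ν)) = 0 ∨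
    (∫⁻ x, ENNReal.ofReal ((∑ i, β i * x i) ^ 2) ∂(Measure.pi fun _ : ι => ν)) = ⊤ := by
  by_cases hβ : ∀ i, β i = 0
  · left
    have : ∀ x : ι → ℝ, (∑ i, β i * x i) = 0 := by
      intro x; exact Finset.sum_eq_zero fun i _ => by rw [hβ i, zero_mul]
    simp [this]
  right
  push_neg at hβ
  obtain ⟨i₀, hi₀⟩ := hβ
  have hf := measurable_ofReal_sq_sum β
  have hsqtop : ∫⁻ t, ENNReal.ofReal (t ^ 2) ∂ν = ⊤ := by
    refine lintegral_ofReal_eq_top (measurable_id.pow_const 2).aestronglyMeasurable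
      (Filter.Eventually.of_forall fun t => sq_nonneg t) hL2
  have hsingle : ∀ y : ι → ℝ,
      (∫⋯∫⁻_{i₀}, (fun x => ENNReal.ofReal ((∑ i, β i * x i) ^ 2)) ∂(fun _ => ν)) y = ⊤ := by
    intro y
    rw [lmarginal_singleton]
    set r := ∑ i ∈ Finset.univ.erase i₀, β i * y i with hr
    have hupd : ∀ t : ℝ, (∑ i, β i * Function.update y i₀ t i) = β i₀ * t + r := by
      intro t
      rw [← Finset.add_sum_erase _ _ (Finset.mem_univ i₀)]
      congr 1
      · simp
      · exact Finset.sum_congr rfl fun i' hi' => by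
          rw [Function.update_of_ne (Finset.ne_of_mem_erase hi')]
    simp_rw [hupd]
    by_contra hne
    have hptwise : ∀ t : ℝ, ENNReal.ofReal (β i₀ ^ 2 * t ^ 2)
        ≤ 2 * ENNReal.ofReal ((β i₀ * t + r) ^ 2) + ENNReal.ofReal (2 * r ^ 2) := by
      intro t
      have h1 : β i₀ ^ 2 * t ^ 2 ≤ 2 * (β i₀ * t + r) ^ 2 + 2 * r ^ 2 := by
        nlinarith [sq_nonneg (β i₀ * t + 2 * r)]
      calc ENNReal.ofReal (β i₀ ^ 2 * t ^ 2)
          ≤ ENNReal.ofReal (2 * (β i₀ * t + r) ^ 2 + 2 * r ^ 2) := ENNReal.ofReal_le_ofReal h1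
        _ = ENNReal.ofReal (2 * (β i₀ * t + r) ^ 2) + ENNReal.ofReal (2 * r ^ 2) :=
            ENNReal.ofReal_add (by positivity) (by positivity)
        _ = 2 * ENNReal.ofReal ((β i₀ * t + r) ^ 2) + ENNReal.ofReal (2 * r ^ 2) := by
            rw [ENNReal.ofReal_mul (by norm_num : (0:ℝ) ≤ 2)]
            norm_num
    have hle : ∫⁻ t, ENNReal.ofReal (β i₀ ^ 2 * t ^ 2) ∂ν
        ≤ ∫⁻ t, (2 * ENNReal.ofReal ((β i₀ * t + r) ^ 2) + ENNReal.ofReal (2 * r ^ 2)) ∂ν :=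
      lintegral_mono fun t => hptwise t
    have hLHS : ∫⁻ t, ENNReal.ofReal (β i₀ ^ 2 * t ^ 2) ∂ν = ⊤ := by
      simp_rw [ENNReal.ofReal_mul (sq_nonneg (β i₀))]
      rw [lintegral_const_mul' _ _ ENNReal.ofReal_ne_top, hsqtop]
      rw [ENNReal.mul_top]
      simp only [ne_eq, ENNReal.ofReal_eq_zero, not_le]
      positivity
    have hRHS : (∫⁻ t, (2 * ENNReal.ofReal ((β i₀ * t + r) ^ 2) + ENNReal.ofReal (2 * r ^ 2)) ∂ν) ≠ ⊤ := by
      have hmeas2 : Measurable fun t : ℝ => ENNReal.ofReal ((β i₀ * t + r) ^ 2) :=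
        ENNReal.measurable_ofReal.comp (((measurable_id.const_mul (β i₀)).add_const r).pow_const 2)
      rw [lintegral_add_right _ measurable_const, lintegral_const,
        lintegral_const_mul' _ _ (by norm_num : (2:ℝ≥0∞) ≠ ⊤)]
      simp only [measure_univ, mul_one]
      exact ENNReal.add_ne_top.2 ⟨ENNReal.mul_ne_top (by norm_num) hne, ENNReal.ofReal_ne_top⟩
    rw [hLHS] at hle
    exact hRHS (top_le_iff.1 hle)
  have hunion : (Finset.univ.erase i₀) ∪ {i₀} = (Finset.univ : Finset ι) := by
    rw [Finset.union_comm, ← Finset.insert_eq, Finset.insert_erase (Finset.mem_univ i₀)]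
  have hsplit := lmarginal_union (s := Finset.univ.erase i₀) (t := {i₀}) (fun _ : ι => ν)
    (fun x : ι → ℝ => ENNReal.ofReal ((∑ i, β i * x i) ^ 2)) hf
    (Finset.disjoint_singleton_right.2 (Finset.notMem_erase i₀ Finset.univ))
  rw [hunion] at hsplit
  have htop : (∫⋯∫⁻_{i₀}, (fun x : ι → ℝ => ENNReal.ofReal ((∑ i, β i * x i) ^ 2)) ∂(fun _ => ν))
      = fun _ => ⊤ := funext hsingle
  rw [lintegral_eq_lmarginal_univ (fun _ : ι => (0 : ℝ)), hsplit, htop]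
  simp [lmarginal]

lemma map_eq_pi {Ω : Type*} [MeasurableSpace Ω] {μ : Measure Ω} [IsProbabilityMeasure μ]
    {ι : Type*} [Fintype ι] (e : ι → Ω → ℝ) (hmeas : ∀ i, Measurable (e i))
    (hindep : iIndepFun e μ) (ν : Measure ℝ) [IsProbabilityMeasure ν]
    (hident : ∀ i, μ.map (e i) = ν) :
    μ.map (fun ω i => e i ω) = Measure.pi fun _ => ν := by
  refine (Measure.pi_eq fun s hs => ?_).symm
  rw [Measure.map_apply (measurable_pi_lambda _ hmeas) (MeasurableSet.univ_pi hs)]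
  have hpre : (fun ω i => e i ω) ⁻¹' (Set.pi Set.univ s)
      = ⋂ i ∈ (Finset.univ : Finset ι), e i ⁻¹' s i := by
    ext ω; simp [Set.mem_pi]
  rw [hpre, hindep.measure_inter_preimage_eq_mul Finset.univ (fun i _ => hs i)]
  exact Finset.prod_congr rfl fun i _ => by
    rw [← hident i, Measure.map_apply (hmeas i) (hs i)]


lemma indep01_of_iIndep3 {Ω : Type*} {mΩ : MeasurableSpace Ω} {μ : Measure Ω}
    {m0 m1 m2 : MeasurableSpace Ω} (h : iIndep ![m0, m1, m2] μ) : Indep m0 m1 μ := by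
  have h2 := h.indep (i := 0) (j := 1) (by decide)
  simpa only [Matrix.cons_val_zero, Matrix.cons_val_one, Matrix.head_cons] using h2

lemma indep_sup_of_iIndep3 {Ω : Type*} {mΩ : MeasurableSpace Ω} {μ : Measure Ω}
    {m0 m1 m2 : MeasurableSpace Ω} (h0 : m0 ≤ mΩ) (h1 : m1 ≤ mΩ) (h2 : m2 ≤ mΩ)
    (h : iIndep ![m0, m1, m2] μ) : Indep (m0 ⊔ m1) m2 μ := by
  have h_le : ∀ i, (![m0, m1, m2] : Fin 3 → MeasurableSpace Ω) i ≤ mΩ := by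
    intro i
    fin_cases i <;>
      simp only [Matrix.cons_val_zero, Matrix.cons_val_one, Matrix.head_cons,
        Matrix.cons_val_two, Matrix.tail_cons]
    · exact h0
    · exact h1
    · exact h2
  have hdisj : Disjoint ({0, 1} : Set (Fin 3)) ({2} : Set (Fin 3)) := by
    rw [Set.disjoint_left]
    intro a ha ha'
    simp only [Set.mem_insert_iff, Set.mem_singleton_iff] at ha ha'
    rcases ha with rfl | rfl <;> exact absurd ha' (by decide)
  have hsup := indep_iSup_of_disjoint h_le h hdisj
  have e01 : (⨆ i ∈ ({0, 1} : Set (Fin 3)), (![m0, m1, m2] : Fin 3 → MeasurableSpace Ω) i)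
      = m0 ⊔ m1 := by
    rw [_root_.iSup_insert, _root_.iSup_singleton]
    simp only [Matrix.cons_val_zero, Matrix.cons_val_one, Matrix.head_cons]
  have e2 : (⨆ i ∈ ({2} : Set (Fin 3)), (![m0, m1, m2] : Fin 3 → MeasurableSpace Ω) i)
      = m2 := by
    rw [_root_.iSup_singleton]
    simp only [Matrix.cons_val_two, Matrix.tail_cons, Matrix.head_cons]
  rwa [e01, e2] at hsup


lemma comap_pi_le {Ω π : Type*} {ι : Type*} [MeasurableSpace π] (X : ι → Ω → π) :
    MeasurableSpace.comap (fun ω i => X i ω)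
        (inferInstance : MeasurableSpace (ι → π))
      ≤ ⨆ i, MeasurableSpace.comap (X i) inferInstance := by
  letI : MeasurableSpace Ω := ⨆ i, MeasurableSpace.comap (X i) inferInstance
  exact Measurable.comap_le (measurable_pi_lambda _ fun i =>
    Measurable.of_comap_le (le_iSup (fun i => MeasurableSpace.comap (X i) inferInstance) i))

lemma comap_pair_le {Ω π₁ π₂ : Type*} {ι₁ ι₂ : Type*} [MeasurableSpace π₁] [MeasurableSpace π₂]
    (X : ι₁ → Ω → π₁) (Y : ι₂ → Ω → π₂) :
    MeasurableSpace.comap (fun ω => ((fun i => X i ω), (fun i => Y i ω)))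
        (inferInstance : MeasurableSpace ((ι₁ → π₁) × (ι₂ → π₂)))
      ≤ (⨆ i, MeasurableSpace.comap (X i) inferInstance)
        ⊔ ⨆ i, MeasurableSpace.comap (Y i) inferInstance := by
  letI : MeasurableSpace Ω :=
    (⨆ i, MeasurableSpace.comap (X i) inferInstance)
      ⊔ ⨆ i, MeasurableSpace.comap (Y i) inferInstance
  refine Measurable.comap_le (Measurable.prodMk ?_ ?_)
  · exact measurable_pi_lambda _ fun i => Measurable.of_comap_le
      (le_trans (le_iSup (fun i => MeasurableSpace.comap (X i) inferInstance) i) le_sup_left)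
  · exact measurable_pi_lambda _ fun i => Measurable.of_comap_le
      (le_trans (le_iSup (fun i => MeasurableSpace.comap (Y i) inferInstance) i) le_sup_right)

lemma comap_comp_le {Ω π κ : Type*} {ι : Type*} [MeasurableSpace π] [MeasurableSpace κ]
    (X : ι → Ω → π) (i : ι) (u : π → κ) (hu : Measurable u) :
    MeasurableSpace.comap (fun ω => u (X i ω)) inferInstance
      ≤ ⨆ i, MeasurableSpace.comap (X i) inferInstance := by
  letI : MeasurableSpace Ω := ⨆ i, MeasurableSpace.comap (X i) inferInstance
  exact Measurable.comap_le (hu.comp (Measurable.of_comap_le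
    (le_iSup (fun i => MeasurableSpace.comap (X i) inferInstance) i)))

end Stmt6Aux

set_option maxHeartbeats 1600000 in
/-- For i.i.d. loadings `Λ₁, …, Λ_N` in `ℝᵏ` with `E‖Λ₁‖² < ∞`, i.i.d. factors
`F₁, …, F_T` in `ℝᵏ` with `Σ_F = E[F₁F₁ᵀ]`, and i.i.d. errors `(e_{tj})` with mean `0` and
variance `σ²`, the three families mutually independent, and deterministic sets
`Q_j ⊆ {1,…,T}` with `|Q_j| ≥ qT` for `q ∈ (0,1]`:
`E‖√(T/N)·∑_j (1/|Q_j|)∑_{t∈Q_j} e_{tj}·Λ_j F_tᵀ‖_F² ≤ σ²·E‖Λ₁‖²·tr(Σ_F)/q`. -/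
theorem stmt_6 {Ω : Type*} [MeasurableSpace Ω] {μ : Measure Ω} [IsProbabilityMeasure μ]
    (k N T : ℕ) (hk : 0 < k) (hN : 0 < N) (hT : 0 < T)
    (Λ : Fin N → Ω → Fin k → ℝ) (F : Fin T → Ω → Fin k → ℝ)
    (e : Fin T → Fin N → Ω → ℝ)
    (hΛmeas : ∀ j, Measurable (Λ j)) (hFmeas : ∀ t, Measurable (F t))
    (hemeas : ∀ t j, Measurable (e t j))
    (hΛindep : iIndepFun Λ μ)
    (hΛident : ∀ j, IdentDistrib (Λ j) (Λ ⟨0, hN⟩) μ μ)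
    (hΛ2 : Integrable (fun ω => ∑ p, (Λ ⟨0, hN⟩ ω p) ^ 2) μ)
    (hFindep : iIndepFun F μ)
    (hFident : ∀ t, IdentDistrib (F t) (F ⟨0, hT⟩) μ μ)
    (SigF : Matrix (Fin k) (Fin k) ℝ)
    (hSigF : ∀ p q', SigF p q' = ∫ ω, F ⟨0, hT⟩ ω p * F ⟨0, hT⟩ ω q' ∂μ)
    (heindep : iIndepFun (fun tj : Fin T × Fin N => e tj.1 tj.2) μ)
    (heident : ∀ t j, IdentDistrib (e t j) (e ⟨0, hT⟩ ⟨0, hN⟩) μ μ)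
    (σ2 : ℝ)
    (hemean : ∫ ω, e ⟨0, hT⟩ ⟨0, hN⟩ ω ∂μ = 0)
    (hevar : ∫ ω, (e ⟨0, hT⟩ ⟨0, hN⟩ ω) ^ 2 ∂μ = σ2)
    (hmutind : iIndep
      ![⨆ j, MeasurableSpace.comap (Λ j) inferInstance,
        ⨆ t, MeasurableSpace.comap (F t) inferInstance,
        ⨆ tj : Fin T × Fin N, MeasurableSpace.comap (e tj.1 tj.2) inferInstance] μ)
    (Q : Fin N → Finset (Fin T)) (q : ℝ) (hq0 : 0 < q) (hq1 : q ≤ 1)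
    (hQ : ∀ j, q * T ≤ ((Q j).card : ℝ)) :
    ∫ ω, ∑ p, ∑ q', (Real.sqrt ((T : ℝ) / N) *
        ∑ j, ((Q j).card : ℝ)⁻¹ * ∑ t ∈ Q j, e t j ω * (Λ j ω p * F t ω q')) ^ 2 ∂μ
      ≤ σ2 * (∫ ω, ∑ p, (Λ ⟨0, hN⟩ ω p) ^ 2 ∂μ) * Matrix.trace SigF / q := by
  
  classical
  -- coordinate measurability helpers
  have hΛp : ∀ (j : Fin N) (p : Fin k), Measurable fun ω => Λ j ω p :=
    fun j p => (measurable_pi_apply p).comp (hΛmeas j)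
  have hFp : ∀ (t : Fin T) (q' : Fin k), Measurable fun ω => F t ω q' :=
    fun t q' => (measurable_pi_apply q').comp (hFmeas t)
  -- nonnegativity facts
  have hσ2nn : (0:ℝ) ≤ σ2 := by
    rw [← hevar]; exact integral_nonneg fun ω => sq_nonneg _
  have hL2nn : (0:ℝ) ≤ ∫ ω, ∑ p, (Λ ⟨0, hN⟩ ω p) ^ 2 ∂μ :=
    integral_nonneg fun ω => Finset.sum_nonneg fun p _ => sq_nonneg _
  have htr : Matrix.trace SigF = ∑ p, ∫ ω, (F ⟨0, hT⟩ ω p) ^ 2 ∂μ := by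
    simp only [Matrix.trace, Matrix.diag]
    refine Finset.sum_congr rfl fun p _ => ?_
    rw [hSigF p p]
    simp only [← pow_two]
  have htrnn : (0:ℝ) ≤ Matrix.trace SigF := by
    rw [htr]; exact Finset.sum_nonneg fun p _ => integral_nonneg fun ω => sq_nonneg _
  have hRHSnn : (0:ℝ) ≤ σ2 * (∫ ω, ∑ p, (Λ ⟨0, hN⟩ ω p) ^ 2 ∂μ) * Matrix.trace SigF / q :=
    div_nonneg (mul_nonneg (mul_nonneg hσ2nn hL2nn) htrnn) hq0.le
  have hTpos : (0:ℝ) < (T:ℝ) := by exact_mod_cast hT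
  have hNpos : (0:ℝ) < (N:ℝ) := by exact_mod_cast hN
  have hTNnn : (0:ℝ) ≤ (T:ℝ)/(N:ℝ) := by positivity
  have hcard : ∀ j : Fin N, (0:ℝ) < ((Q j).card : ℝ) :=
    fun j => lt_of_lt_of_le (by positivity) (hQ j)
  -- the error law
  set ν : Measure ℝ := μ.map (e ⟨0, hT⟩ ⟨0, hN⟩) with hν
  haveI hνprob : IsProbabilityMeasure ν := Measure.isProbabilityMeasure_map (hemeas _ _).aemeasurable
  -- bundled maps
  set E : Ω → (Fin T × Fin N) → ℝ := fun ω tj => e tj.1 tj.2 ω with hEdef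
  have hEmeas : Measurable E := measurable_pi_lambda _ fun tj => hemeas tj.1 tj.2
  set W : Ω → ((Fin N → Fin k → ℝ) × (Fin T → Fin k → ℝ)) :=
    fun ω => (fun j => Λ j ω, fun t => F t ω) with hWdef
  have hWmeas : Measurable W :=
    (measurable_pi_lambda _ fun j => hΛmeas j).prodMk (measurable_pi_lambda _ fun t => hFmeas t)
  set B : ((Fin N → Fin k → ℝ) × (Fin T → Fin k → ℝ)) → Fin k → Fin k → (Fin T × Fin N) → ℝ :=
    fun v p q' tj => if tj.1 ∈ Q tj.2 then ((Q tj.2).card : ℝ)⁻¹ * (v.1 tj.2 p * v.2 tj.1 q') else 0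
    with hBdef
  have hBmeas : ∀ (p q' : Fin k) (tj : Fin T × Fin N), Measurable fun v :
      ((Fin N → Fin k → ℝ) × (Fin T → Fin k → ℝ)) => B v p q' tj := by
    intro p q' tj
    simp only [hBdef]
    by_cases htj : tj.1 ∈ Q tj.2 <;> simp only [htj, if_true, if_false]
    · have h1 : Measurable fun v : ((Fin N → Fin k → ℝ) × (Fin T → Fin k → ℝ)) => v.1 tj.2 p :=
        (measurable_pi_apply p).comp ((measurable_pi_apply tj.2).comp measurable_fst)
      have h2 : Measurable fun v : ((Fin N → Fin k → ℝ) × (Fin T → Fin k → ℝ)) => v.2 tj.1 q' :=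
        (measurable_pi_apply q').comp ((measurable_pi_apply tj.1).comp measurable_snd)
      exact (h1.mul h2).const_mul _
    · exact measurable_const
  have hsum : ∀ (p q' : Fin k), Measurable fun z :
      ((Fin N → Fin k → ℝ) × (Fin T → Fin k → ℝ)) × ((Fin T × Fin N) → ℝ) =>
      ∑ tj : Fin T × Fin N, B z.1 p q' tj * z.2 tj := by
    intro p q'
    refine Finset.measurable_sum _ fun tj _ => ?_
    exact ((hBmeas p q' tj).comp measurable_fst).mul ((measurable_pi_apply tj).comp measurable_snd)
  have hφmeas : ∀ (p q' : Fin k), Measurable fun z :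
      ((Fin N → Fin k → ℝ) × (Fin T → Fin k → ℝ)) × ((Fin T × Fin N) → ℝ) =>
      ENNReal.ofReal ((∑ tj : Fin T × Fin N, B z.1 p q' tj * z.2 tj) ^ 2) :=
    fun p q' => ENNReal.measurable_ofReal.comp ((hsum p q').pow_const 2)
  have hSmeasΩ : ∀ (p q' : Fin k), Measurable fun ω =>
      ∑ tj : Fin T × Fin N, B (W ω) p q' tj * E ω tj :=
    fun p q' => (hsum p q').comp (hWmeas.prodMk hEmeas)
  have hmeasJint : ∀ (p q' : Fin k), Measurable fun ω =>
      ENNReal.ofReal ((∑ tj : Fin T × Fin N, B (W ω) p q' tj * E ω tj) ^ 2) :=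
    fun p q' => ENNReal.measurable_ofReal.comp ((hSmeasΩ p q').pow_const 2)
  have hmeasB2 : ∀ (p q' : Fin k) (tj : Fin T × Fin N), Measurable fun ω =>
      ENNReal.ofReal ((B (W ω) p q' tj) ^ 2) :=
    fun p q' tj => ENNReal.measurable_ofReal.comp (((hBmeas p q' tj).comp hWmeas).pow_const 2)
  have hmeasB2sum : ∀ (p q' : Fin k), Measurable fun v :
      ((Fin N → Fin k → ℝ) × (Fin T → Fin k → ℝ)) =>
      ENNReal.ofReal (∑ tj : Fin T × Fin N, (B v p q' tj) ^ 2) :=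
    fun p q' => ENNReal.measurable_ofReal.comp
      (Finset.measurable_sum _ fun tj _ => (hBmeas p q' tj).pow_const 2)
  -- rewrite the summand
  have hSrw : ∀ (p q' : Fin k) (ω : Ω),
      (∑ j, ((Q j).card : ℝ)⁻¹ * ∑ t ∈ Q j, e t j ω * (Λ j ω p * F t ω q'))
        = ∑ tj : Fin T × Fin N, B (W ω) p q' tj * E ω tj := by
    intro p q' ω
    rw [Fintype.sum_prod_type, Finset.sum_comm]
    refine Finset.sum_congr rfl fun j _ => ?_
    rw [Finset.mul_sum]
    simp only [hBdef, hEdef, hWdef]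
    symm
    calc (∑ t : Fin T, (if t ∈ Q j then ((Q j).card : ℝ)⁻¹ * (Λ j ω p * F t ω q') else 0) * e t j ω)
        = ∑ t : Fin T, (if t ∈ Q j then ((Q j).card : ℝ)⁻¹ * (e t j ω * (Λ j ω p * F t ω q')) else 0) := by
          refine Finset.sum_congr rfl fun t _ => ?_
          by_cases ht : t ∈ Q j <;> simp only [ht, if_true, if_false, zero_mul] <;> ring
      _ = ∑ t ∈ Finset.univ ∩ Q j, ((Q j).card : ℝ)⁻¹ * (e t j ω * (Λ j ω p * F t ω q')) := by
          rw [Finset.sum_ite_mem]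
      _ = ∑ t ∈ Q j, ((Q j).card : ℝ)⁻¹ * (e t j ω * (Λ j ω p * F t ω q')) := by
          rw [Finset.univ_inter]
  simp only [hSrw]
  -- convert to a lower integral
  have hbigmeas : Measurable fun ω => ∑ p, ∑ q',
      (Real.sqrt ((T:ℝ)/(N:ℝ)) * ∑ tj : Fin T × Fin N, B (W ω) p q' tj * E ω tj) ^ 2 :=
    Finset.measurable_sum _ fun p _ => Finset.measurable_sum _ fun q' _ =>
      (((hSmeasΩ p q').const_mul _).pow_const 2)
  rw [integral_eq_lintegral_of_nonneg_ae (Filter.Eventually.of_forall fun ω =>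
      Finset.sum_nonneg fun p _ => Finset.sum_nonneg fun q' _ => sq_nonneg _)
      hbigmeas.aestronglyMeasurable]
  have hItot : ∫⁻ ω, ENNReal.ofReal (∑ p, ∑ q',
        (Real.sqrt ((T:ℝ)/(N:ℝ)) * ∑ tj : Fin T × Fin N, B (W ω) p q' tj * E ω tj) ^ 2) ∂μ
      = ENNReal.ofReal ((T:ℝ)/(N:ℝ)) * ∑ p, ∑ q',
        ∫⁻ ω, ENNReal.ofReal ((∑ tj : Fin T × Fin N, B (W ω) p q' tj * E ω tj) ^ 2) ∂μ := by
    have hptw : ∀ ω, ENNReal.ofReal (∑ p, ∑ q',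
        (Real.sqrt ((T:ℝ)/(N:ℝ)) * ∑ tj : Fin T × Fin N, B (W ω) p q' tj * E ω tj) ^ 2)
        = ∑ p, ∑ q', ENNReal.ofReal ((T:ℝ)/(N:ℝ)) *
          ENNReal.ofReal ((∑ tj : Fin T × Fin N, B (W ω) p q' tj * E ω tj) ^ 2) := by
      intro ω
      rw [ENNReal.ofReal_sum_of_nonneg (fun p _ => Finset.sum_nonneg fun q' _ => sq_nonneg _)]
      refine Finset.sum_congr rfl fun p _ => ?_
      rw [ENNReal.ofReal_sum_of_nonneg (fun q' _ => sq_nonneg _)]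
      refine Finset.sum_congr rfl fun q' _ => ?_
      rw [mul_pow, Real.sq_sqrt hTNnn, ENNReal.ofReal_mul hTNnn]
    simp_rw [hptw]
    rw [lintegral_finset_sum _ (fun p _ => Finset.measurable_sum _ fun q' _ =>
      (hmeasJint p q').const_mul _)]
    rw [Finset.mul_sum]
    refine Finset.sum_congr rfl fun p _ => ?_
    rw [lintegral_finset_sum _ (fun q' _ => (hmeasJint p q').const_mul _)]
    rw [Finset.mul_sum]
    refine Finset.sum_congr rfl fun q' _ => ?_
    exact lintegral_const_mul' _ _ ENNReal.ofReal_ne_top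
  rw [hItot]
  -- the law of E is an iid product
  have hmapE : μ.map E = Measure.pi fun _ : Fin T × Fin N => ν := by
    refine Stmt6Aux.map_eq_pi (fun tj : Fin T × Fin N => e tj.1 tj.2)
      (fun tj => hemeas tj.1 tj.2) heindep ν (fun tj => ?_)
    rw [hν]
    exact (heident tj.1 tj.2).map_eq
  -- independence of W and E
  have hsup' : Indep ((⨆ j, MeasurableSpace.comap (Λ j) inferInstance : MeasurableSpace Ω) ⊔ (⨆ t, MeasurableSpace.comap (F t) inferInstance : MeasurableSpace Ω)) (⨆ tj : Fin T × Fin N, MeasurableSpace.comap (e tj.1 tj.2) inferInstance : MeasurableSpace Ω) μ :=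
    Stmt6Aux.indep_sup_of_iIndep3 (iSup_le fun j => (hΛmeas j).comap_le)
      (iSup_le fun t => (hFmeas t).comap_le)
      (iSup_le fun tj => (hemeas tj.1 tj.2).comap_le) hmutind
  have hIndepWE : IndepFun W E μ := by
    rw [IndepFun_iff_Indep]
    exact indep_of_indep_of_le_left
      (indep_of_indep_of_le_right hsup' (Stmt6Aux.comap_pi_le fun tj : Fin T × Fin N => e tj.1 tj.2))
      (Stmt6Aux.comap_pair_le Λ F)
  have hmapPair : μ.map (fun ω => (W ω, E ω)) = (μ.map W).prod (μ.map E) :=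
    (indepFun_iff_map_prod_eq_prod_map_map hWmeas.aemeasurable hEmeas.aemeasurable).1 hIndepWE
  -- fiber representation of each J
  have hJrep : ∀ (p q' : Fin k),
      (∫⁻ ω, ENNReal.ofReal ((∑ tj : Fin T × Fin N, B (W ω) p q' tj * E ω tj) ^ 2) ∂μ)
        = ∫⁻ v, (∫⁻ x, ENNReal.ofReal ((∑ tj : Fin T × Fin N, B v p q' tj * x tj) ^ 2)
            ∂(Measure.pi fun _ : Fin T × Fin N => ν)) ∂(μ.map W) := by
    intro p q'
    have h1 : (∫⁻ ω, ENNReal.ofReal ((∑ tj : Fin T × Fin N, B (W ω) p q' tj * E ω tj) ^ 2) ∂μ)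
        = ∫⁻ z, ENNReal.ofReal ((∑ tj : Fin T × Fin N, B z.1 p q' tj * z.2 tj) ^ 2)
            ∂(μ.map (fun ω => (W ω, E ω))) :=
      (lintegral_map (hφmeas p q') (hWmeas.prodMk hEmeas)).symm
    rw [h1, hmapPair, hmapE]
    rw [lintegral_prod _ (hφmeas p q').aemeasurable]
  -- case on square-integrability of the error law
  by_cases he2 : Integrable (fun t : ℝ => t ^ 2) ν
  · -- main case : errors are square integrable
    have hmeanν : ∫ t, t ∂ν = 0 := by
      have h := integral_map (μ := μ) (φ := e ⟨0, hT⟩ ⟨0, hN⟩) (f := fun t : ℝ => t)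
        (hemeas ⟨0, hT⟩ ⟨0, hN⟩).aemeasurable aestronglyMeasurable_id
      rw [hν]
      exact h.trans hemean
    have hvarν : ∫ t, t ^ 2 ∂ν = σ2 := by
      have h := integral_map (μ := μ) (φ := e ⟨0, hT⟩ ⟨0, hN⟩) (f := fun t : ℝ => t ^ 2)
        (hemeas ⟨0, hT⟩ ⟨0, hN⟩).aemeasurable
        ((measurable_id.pow_const 2).aestronglyMeasurable)
      rw [hν]
      exact h.trans hevar
    have hJval : ∀ (p q' : Fin k),
        (∫⁻ ω, ENNReal.ofReal ((∑ tj : Fin T × Fin N, B (W ω) p q' tj * E ω tj) ^ 2) ∂μ)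
          = ENNReal.ofReal σ2 *
            ∫⁻ ω, ENNReal.ofReal (∑ tj : Fin T × Fin N, (B (W ω) p q' tj) ^ 2) ∂μ := by
      intro p q'
      rw [hJrep p q']
      have hfib : ∀ v, (∫⁻ x, ENNReal.ofReal ((∑ tj : Fin T × Fin N, B v p q' tj * x tj) ^ 2)
          ∂(Measure.pi fun _ : Fin T × Fin N => ν))
          = ENNReal.ofReal σ2 * ENNReal.ofReal (∑ tj : Fin T × Fin N, (B v p q' tj) ^ 2) := by
        intro v
        rw [Stmt6Aux.fiber_sq_integral ν he2 hmeanν (B v p q'), hvarν,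
          ENNReal.ofReal_mul hσ2nn]
      simp_rw [hfib]
      rw [lintegral_const_mul' _ _ ENNReal.ofReal_ne_top]
      congr 1
      exact lintegral_map (hmeasB2sum p q') hWmeas
    -- identical distribution transfers
    have hA : ∀ (j : Fin N) (p : Fin k), (∫⁻ ω, ENNReal.ofReal ((Λ j ω p) ^ 2) ∂μ)
        = ∫⁻ ω, ENNReal.ofReal ((Λ ⟨0, hN⟩ ω p) ^ 2) ∂μ := by
      intro j p
      exact IdentDistrib.lintegral_eq ((hΛident j).comp
        (show Measurable fun y : Fin k → ℝ => ENNReal.ofReal ((y p) ^ 2) from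
          ENNReal.measurable_ofReal.comp ((measurable_pi_apply p).pow_const 2)))
    have hBqid : ∀ (t : Fin T) (q' : Fin k), (∫⁻ ω, ENNReal.ofReal ((F t ω q') ^ 2) ∂μ)
        = ∫⁻ ω, ENNReal.ofReal ((F ⟨0, hT⟩ ω q') ^ 2) ∂μ := by
      intro t q'
      exact IdentDistrib.lintegral_eq ((hFident t).comp
        (show Measurable fun y : Fin k → ℝ => ENNReal.ofReal ((y q') ^ 2) from
          ENNReal.measurable_ofReal.comp ((measurable_pi_apply q').pow_const 2)))
    -- independence of loadings and factors
    have hindΛF : ∀ (j : Fin N) (t : Fin T) (p q' : Fin k),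
        (∫⁻ ω, ENNReal.ofReal ((Λ j ω p) ^ 2) * ENNReal.ofReal ((F t ω q') ^ 2) ∂μ)
          = (∫⁻ ω, ENNReal.ofReal ((Λ j ω p) ^ 2) ∂μ)
            * ∫⁻ ω, ENNReal.ofReal ((F t ω q') ^ 2) ∂μ := by
      intro j t p q'
      have h01 : Indep (⨆ j, MeasurableSpace.comap (Λ j) inferInstance : MeasurableSpace Ω) (⨆ t, MeasurableSpace.comap (F t) inferInstance : MeasurableSpace Ω) μ := Stmt6Aux.indep01_of_iIndep3 hmutind
      have hu1 : Measurable fun y : Fin k → ℝ => ENNReal.ofReal ((y p) ^ 2) :=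
        ENNReal.measurable_ofReal.comp ((measurable_pi_apply p).pow_const 2)
      have hu2 : Measurable fun y : Fin k → ℝ => ENNReal.ofReal ((y q') ^ 2) :=
        ENNReal.measurable_ofReal.comp ((measurable_pi_apply q').pow_const 2)
      have hIndep : IndepFun (fun ω => ENNReal.ofReal ((Λ j ω p) ^ 2))
          (fun ω => ENNReal.ofReal ((F t ω q') ^ 2)) μ := by
        rw [IndepFun_iff_Indep]
        exact indep_of_indep_of_le_left
          (indep_of_indep_of_le_right h01 (Stmt6Aux.comap_comp_le F t _ hu2))
          (Stmt6Aux.comap_comp_le Λ j _ hu1)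
      exact lintegral_mul_eq_lintegral_mul_lintegral_of_indepFun''
        (ENNReal.measurable_ofReal.comp ((hΛp j p).pow_const 2)).aemeasurable
        (ENNReal.measurable_ofReal.comp ((hFp t q').pow_const 2)).aemeasurable hIndep
    -- evaluate the coefficient integral
    have hsum2 : ∀ (p q' : Fin k),
        (∫⁻ ω, ENNReal.ofReal (∑ tj : Fin T × Fin N, (B (W ω) p q' tj) ^ 2) ∂μ)
          = ENNReal.ofReal (∑ j, ((Q j).card : ℝ)⁻¹) *
            ((∫⁻ ω, ENNReal.ofReal ((Λ ⟨0, hN⟩ ω p) ^ 2) ∂μ)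
              * ∫⁻ ω, ENNReal.ofReal ((F ⟨0, hT⟩ ω q') ^ 2) ∂μ) := by
      intro p q'
      have hptw : ∀ ω, ENNReal.ofReal (∑ tj : Fin T × Fin N, (B (W ω) p q' tj) ^ 2)
          = ∑ tj : Fin T × Fin N, ENNReal.ofReal ((B (W ω) p q' tj) ^ 2) :=
        fun ω => ENNReal.ofReal_sum_of_nonneg fun tj _ => sq_nonneg _
      simp_rw [hptw]
      rw [lintegral_finset_sum _ (fun tj _ => hmeasB2 p q' tj)]
      have hterm : ∀ tj : Fin T × Fin N,
          (∫⁻ ω, ENNReal.ofReal ((B (W ω) p q' tj) ^ 2) ∂μ)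
            = if tj.1 ∈ Q tj.2 then ENNReal.ofReal ((((Q tj.2).card : ℝ)⁻¹) ^ 2) *
                ((∫⁻ ω, ENNReal.ofReal ((Λ ⟨0, hN⟩ ω p) ^ 2) ∂μ)
                  * ∫⁻ ω, ENNReal.ofReal ((F ⟨0, hT⟩ ω q') ^ 2) ∂μ) else 0 := by
        intro tj
        by_cases htj : tj.1 ∈ Q tj.2
        · simp only [hBdef, hWdef, htj, if_true]
          have hsq : ∀ ω, ENNReal.ofReal ((((Q tj.2).card : ℝ)⁻¹ * (Λ tj.2 ω p * F tj.1 ω q')) ^ 2)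
              = ENNReal.ofReal ((((Q tj.2).card : ℝ)⁻¹) ^ 2) *
                (ENNReal.ofReal ((Λ tj.2 ω p) ^ 2) * ENNReal.ofReal ((F tj.1 ω q') ^ 2)) := by
            intro ω
            rw [mul_pow, mul_pow, ENNReal.ofReal_mul (by positivity),
              ENNReal.ofReal_mul (sq_nonneg _)]
          simp_rw [hsq]
          rw [lintegral_const_mul' _ _ ENNReal.ofReal_ne_top, hindΛF tj.2 tj.1 p q',
            hA tj.2 p, hBqid tj.1 q']
        · simp only [hBdef, htj, if_false]
          simp
      simp_rw [hterm]
      rw [Fintype.sum_prod_type, Finset.sum_comm]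
      have hj : ∀ j : Fin N, (∑ t : Fin T, if t ∈ Q j then
          ENNReal.ofReal ((((Q j).card : ℝ)⁻¹) ^ 2) *
            ((∫⁻ ω, ENNReal.ofReal ((Λ ⟨0, hN⟩ ω p) ^ 2) ∂μ)
              * ∫⁻ ω, ENNReal.ofReal ((F ⟨0, hT⟩ ω q') ^ 2) ∂μ) else 0)
          = ENNReal.ofReal (((Q j).card : ℝ)⁻¹) *
            ((∫⁻ ω, ENNReal.ofReal ((Λ ⟨0, hN⟩ ω p) ^ 2) ∂μ)
              * ∫⁻ ω, ENNReal.ofReal ((F ⟨0, hT⟩ ω q') ^ 2) ∂μ) := by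
        intro j
        rw [Finset.sum_ite_mem, Finset.univ_inter, Finset.sum_const, nsmul_eq_mul]
        have hcoef : ((Q j).card : ℝ≥0∞) * ENNReal.ofReal ((((Q j).card : ℝ)⁻¹) ^ 2)
            = ENNReal.ofReal (((Q j).card : ℝ)⁻¹) := by
          rw [← ENNReal.ofReal_natCast, ← ENNReal.ofReal_mul (by positivity)]
          congr 1
          rw [pow_two, ← mul_assoc, mul_inv_cancel₀ (hcard j).ne', one_mul]
        rw [← mul_assoc, hcoef]
      simp_rw [hj]
      rw [← Finset.sum_mul]
      congr 1
      exact (ENNReal.ofReal_sum_of_nonneg fun j _ => by positivity).symm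
    -- sum of loading second moments
    have hΛint : ∀ p : Fin k, Integrable (fun ω => (Λ ⟨0, hN⟩ ω p) ^ 2) μ := by
      intro p
      refine hΛ2.mono' ((hΛp ⟨0, hN⟩ p).pow_const 2).aestronglyMeasurable ?_
      filter_upwards with ω
      rw [Real.norm_eq_abs, abs_of_nonneg (sq_nonneg _)]
      exact Finset.single_le_sum (fun p _ => sq_nonneg ((Λ ⟨0, hN⟩ ω p))) (Finset.mem_univ p)
    have hsumA : (∑ p, ∫⁻ ω, ENNReal.ofReal ((Λ ⟨0, hN⟩ ω p) ^ 2) ∂μ)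
        = ENNReal.ofReal (∫ ω, ∑ p, (Λ ⟨0, hN⟩ ω p) ^ 2 ∂μ) := by
      have h1 : ∀ p : Fin k, (∫⁻ ω, ENNReal.ofReal ((Λ ⟨0, hN⟩ ω p) ^ 2) ∂μ)
          = ENNReal.ofReal (∫ ω, (Λ ⟨0, hN⟩ ω p) ^ 2 ∂μ) :=
        fun p => (ofReal_integral_eq_lintegral_ofReal (hΛint p)
          (Filter.Eventually.of_forall fun ω => sq_nonneg _)).symm
      simp_rw [h1]
      rw [← ENNReal.ofReal_sum_of_nonneg (fun p _ => integral_nonneg fun ω => sq_nonneg _),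
        ← integral_finset_sum _ (fun p _ => hΛint p)]
    -- combine the double sum
    have hsumJ : (∑ p, ∑ q',
        ∫⁻ ω, ENNReal.ofReal ((∑ tj : Fin T × Fin N, B (W ω) p q' tj * E ω tj) ^ 2) ∂μ)
        = ENNReal.ofReal σ2 * (ENNReal.ofReal (∑ j, ((Q j).card : ℝ)⁻¹) *
          ((∑ p, ∫⁻ ω, ENNReal.ofReal ((Λ ⟨0, hN⟩ ω p) ^ 2) ∂μ)
            * ∑ q', ∫⁻ ω, ENNReal.ofReal ((F ⟨0, hT⟩ ω q') ^ 2) ∂μ)) := by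
      simp_rw [hJval, hsum2]
      rw [Finset.sum_mul_sum]
      simp only [Finset.mul_sum]
    rw [hsumJ, hsumA]
    by_cases hF2 : ∀ q' : Fin k, Integrable (fun ω => (F ⟨0, hT⟩ ω q') ^ 2) μ
    · -- all factor second moments finite
      have hsumB : (∑ q', ∫⁻ ω, ENNReal.ofReal ((F ⟨0, hT⟩ ω q') ^ 2) ∂μ)
          = ENNReal.ofReal (Matrix.trace SigF) := by
        have h1 : ∀ q' : Fin k, (∫⁻ ω, ENNReal.ofReal ((F ⟨0, hT⟩ ω q') ^ 2) ∂μ)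
            = ENNReal.ofReal (∫ ω, (F ⟨0, hT⟩ ω q') ^ 2 ∂μ) :=
          fun q' => (ofReal_integral_eq_lintegral_ofReal (hF2 q')
            (Filter.Eventually.of_forall fun ω => sq_nonneg _)).symm
        simp_rw [h1]
        rw [← ENNReal.ofReal_sum_of_nonneg (fun q' _ => integral_nonneg fun ω => sq_nonneg _),
          ← htr]
      rw [hsumB]
      have hScnn : (0:ℝ) ≤ ∑ j, ((Q j).card : ℝ)⁻¹ :=
        Finset.sum_nonneg fun j _ => by positivity
      rw [ENNReal.toReal_mul, ENNReal.toReal_mul, ENNReal.toReal_mul, ENNReal.toReal_mul,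
        ENNReal.toReal_ofReal hTNnn, ENNReal.toReal_ofReal hσ2nn, ENNReal.toReal_ofReal hScnn,
        ENNReal.toReal_ofReal hL2nn, ENNReal.toReal_ofReal htrnn]
      have hScle : (∑ j, ((Q j).card : ℝ)⁻¹) ≤ (N:ℝ) / (q * T) := by
        have hle : ∀ j : Fin N, ((Q j).card : ℝ)⁻¹ ≤ (q * T)⁻¹ := by
          intro j
          exact inv_anti₀ (by positivity) (hQ j)
        calc (∑ j, ((Q j).card : ℝ)⁻¹) ≤ ∑ _j : Fin N, (q * T)⁻¹ :=
              Finset.sum_le_sum fun j _ => hle j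
          _ = (N:ℝ) * (q * T)⁻¹ := by
              rw [Finset.sum_const, Finset.card_univ, Fintype.card_fin, nsmul_eq_mul]
          _ = (N:ℝ) / (q * T) := by rw [div_eq_mul_inv]
      calc (T:ℝ)/(N:ℝ) * (σ2 * ((∑ j, ((Q j).card : ℝ)⁻¹) *
            ((∫ ω, ∑ p, (Λ ⟨0, hN⟩ ω p) ^ 2 ∂μ) * Matrix.trace SigF)))
          ≤ (T:ℝ)/(N:ℝ) * (σ2 * (((N:ℝ) / (q * T)) *
            ((∫ ω, ∑ p, (Λ ⟨0, hN⟩ ω p) ^ 2 ∂μ) * Matrix.trace SigF))) := by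
            refine mul_le_mul_of_nonneg_left (mul_le_mul_of_nonneg_left
              (mul_le_mul_of_nonneg_right hScle (mul_nonneg hL2nn htrnn)) hσ2nn) hTNnn
        _ = σ2 * (∫ ω, ∑ p, (Λ ⟨0, hN⟩ ω p) ^ 2 ∂μ) * Matrix.trace SigF / q := by
            field_simp
    · -- some factor second moment infinite : left side is zero
      push_neg at hF2
      obtain ⟨q0, hq0'⟩ := hF2
      have hBtop : (∫⁻ ω, ENNReal.ofReal ((F ⟨0, hT⟩ ω q0) ^ 2) ∂μ) = ⊤ :=
        Stmt6Aux.lintegral_ofReal_eq_top ((hFp ⟨0, hT⟩ q0).pow_const 2).aestronglyMeasurable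
          (Filter.Eventually.of_forall fun ω => sq_nonneg _) hq0'
      have hsumBtop : (∑ q', ∫⁻ ω, ENNReal.ofReal ((F ⟨0, hT⟩ ω q') ^ 2) ∂μ) = ⊤ := by
        refine eq_top_iff.2 ?_
        rw [← hBtop]
        exact Finset.single_le_sum
          (f := fun q' : Fin k => ∫⁻ ω, ENNReal.ofReal ((F ⟨0, hT⟩ ω q') ^ 2) ∂μ)
          (fun q' _ => zero_le) (Finset.mem_univ q0)
      rw [hsumBtop]
      have hmt : ∀ x : ℝ≥0∞, x * ⊤ = 0 ∨ x * ⊤ = ⊤ := by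
        intro x
        rcases eq_or_ne x 0 with h | h
        · left; simp [h]
        · right; exact ENNReal.mul_top h
      have hmt2 : ∀ {y : ℝ≥0∞} (_ : y = 0 ∨ y = ⊤) (x : ℝ≥0∞), x * y = 0 ∨ x * y = ⊤ := by
        intro y hy x
        rcases hy with rfl | rfl
        · left; simp
        · exact hmt x
      have h1' := hmt (ENNReal.ofReal (∫ ω, ∑ p, (Λ ⟨0, hN⟩ ω p) ^ 2 ∂μ))
      have h2' := hmt2 h1' (ENNReal.ofReal (∑ j, ((Q j).card : ℝ)⁻¹))
      have h3' := hmt2 h2' (ENNReal.ofReal σ2)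
      have hX := hmt2 h3' (ENNReal.ofReal ((T:ℝ)/(N:ℝ)))
      rcases hX with h | h <;> rw [h] <;> simpa using hRHSnn
  · -- degenerate case : errors not square integrable, σ2 = 0
    have hσ20 : σ2 = 0 := by
      rw [← hevar]
      refine integral_undef fun hcon : Integrable (fun ω => (e ⟨0, hT⟩ ⟨0, hN⟩ ω) ^ 2) μ => ?_
      have hmm : AEStronglyMeasurable (fun t : ℝ => t ^ 2) ν :=
        (measurable_id.pow_const 2).aestronglyMeasurable
      exact he2 ((integrable_map_measure hmm (hemeas ⟨0, hT⟩ ⟨0, hN⟩).aemeasurable).2 hcon)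
    have hJ01 : ∀ (p q' : Fin k),
        (∫⁻ ω, ENNReal.ofReal ((∑ tj : Fin T × Fin N, B (W ω) p q' tj * E ω tj) ^ 2) ∂μ) = 0 ∨
        (∫⁻ ω, ENNReal.ofReal ((∑ tj : Fin T × Fin N, B (W ω) p q' tj * E ω tj) ^ 2) ∂μ) = ⊤ := by
      intro p q'
      rw [hJrep p q']
      have h2x : ∀ v, (∫⁻ x, ENNReal.ofReal ((∑ tj : Fin T × Fin N, B v p q' tj * x tj) ^ 2)
          ∂(Measure.pi fun _ : Fin T × Fin N => ν))
          = 2 * ∫⁻ x, ENNReal.ofReal ((∑ tj : Fin T × Fin N, B v p q' tj * x tj) ^ 2)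
            ∂(Measure.pi fun _ : Fin T × Fin N => ν) := by
        intro v
        rcases Stmt6Aux.fiber_sq_top ν he2 (B v p q') with h | h <;> rw [h] <;> simp
      refine Stmt6Aux.eq_zero_or_top_of_eq_two_mul ?_
      calc (∫⁻ v, (∫⁻ x, ENNReal.ofReal ((∑ tj : Fin T × Fin N, B v p q' tj * x tj) ^ 2)
              ∂(Measure.pi fun _ : Fin T × Fin N => ν)) ∂(μ.map W))
          = ∫⁻ v, 2 * (∫⁻ x, ENNReal.ofReal ((∑ tj : Fin T × Fin N, B v p q' tj * x tj) ^ 2)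
              ∂(Measure.pi fun _ : Fin T × Fin N => ν)) ∂(μ.map W) := lintegral_congr h2x
        _ = 2 * ∫⁻ v, (∫⁻ x, ENNReal.ofReal ((∑ tj : Fin T × Fin N, B v p q' tj * x tj) ^ 2)
              ∂(Measure.pi fun _ : Fin T × Fin N => ν)) ∂(μ.map W) :=
            lintegral_const_mul' _ _ (by norm_num)
    rw [hσ20]
    simp only [zero_mul, zero_div]
    by_cases hall : ∀ (p q' : Fin k),
        (∫⁻ ω, ENNReal.ofReal ((∑ tj : Fin T × Fin N, B (W ω) p q' tj * E ω tj) ^ 2) ∂μ) = 0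
    · rw [Finset.sum_eq_zero (fun p _ => Finset.sum_eq_zero fun q' _ => hall p q'), mul_zero]
      simp
    · push_neg at hall
      obtain ⟨p0, q0, hpq⟩ := hall
      have h1 : (∫⁻ ω, ENNReal.ofReal
          ((∑ tj : Fin T × Fin N, B (W ω) p0 q0 tj * E ω tj) ^ 2) ∂μ) = ⊤ :=
        (hJ01 p0 q0).resolve_left hpq
      have htop : (∑ p, ∑ q',
          ∫⁻ ω, ENNReal.ofReal ((∑ tj : Fin T × Fin N, B (W ω) p q' tj * E ω tj) ^ 2) ∂μ) = ⊤ := by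
        refine eq_top_iff.2 ?_
        rw [← h1]
        refine le_trans (Finset.single_le_sum
          (f := fun q' : Fin k =>
            ∫⁻ ω, ENNReal.ofReal ((∑ tj : Fin T × Fin N, B (W ω) p0 q' tj * E ω tj) ^ 2) ∂μ)
          (fun q' _ => zero_le) (Finset.mem_univ q0)) ?_
        exact Finset.single_le_sum (f := fun p => ∑ q',
          ∫⁻ ω, ENNReal.ofReal ((∑ tj : Fin T × Fin N, B (W ω) p q' tj * E ω tj) ^ 2) ∂μ)
          (fun p _ => zero_le) (Finset.mem_univ p0)
      rw [htop, ENNReal.mul_top (ENNReal.ofReal_pos.2 (by positivity)).ne']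
      simp
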